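/- The set 𝒢' is a minimal generating set for the ideal ℘: no element of 𝒢' belongs to the ideal of R generated by the remaining elements of 𝒢'. -/

import Mathlib

open MvPolynomial
open Fin.NatCast

/-- The defining ideal `℘` of the monomial curve: the kernel of the `K`-algebra map
`K[X_0,…,X_p] → K[T]`, `X_i ↦ T^{m_i}`. -/
noncomputable def curveIdeal (K : Type*) [Field K] (p : ℕ) (m : ℕ → ℕ) :
    Ideal (MvPolynomial (Fin (p + 1)) K) :=
  RingHom.ker (MvPolynomial.aeval (R := K)
    (fun k : Fin (p + 1) => (Polynomial.X : Polynomial K) ^ m (k : ℕ))).toRingHom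

/-- `ε(i,j) = i + j` if `i + j < p`, and `ε(i,j) = p` if `i + j ≥ p`. -/
def eps (p i j : ℕ) : ℕ := if i + j < p then i + j else p

/-- The binomial `φ(i,j) = X_i·X_j − X_{ε(i,j)}·X_{i+j−ε(i,j)}`. -/
noncomputable def phi (K : Type*) [Field K] (p i j : ℕ) : MvPolynomial (Fin (p + 1)) K :=
  X ((i : ℕ) : Fin (p + 1)) * X ((j : ℕ) : Fin (p + 1)) -
    X ((eps p i j : ℕ) : Fin (p + 1)) * X ((i + j - eps p i j : ℕ) : Fin (p + 1))

/-- The binomial `ψ(b,i) = X_{b+i}·X_p^a − X_i·X_0^{a+d}`. -/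
noncomputable def psi (K : Type*) [Field K] (p a b d i : ℕ) : MvPolynomial (Fin (p + 1)) K :=
  X ((b + i : ℕ) : Fin (p + 1)) * (X ((p : ℕ) : Fin (p + 1))) ^ a -
    X ((i : ℕ) : Fin (p + 1)) * (X (0 : Fin (p + 1))) ^ (a + d)

/-- The set `𝒢' = {φ(i,j) : 1 ≤ i ≤ j ≤ p−1} ∪ {ψ(b,i) : 0 ≤ i ≤ p−b}`. -/
noncomputable def Gset (K : Type*) [Field K] (p a b d : ℕ) :
    Set (MvPolynomial (Fin (p + 1)) K) :=
  {f | ∃ i j : ℕ, 1 ≤ i ∧ i ≤ j ∧ j < p ∧ f = phi K p i j} ∪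
    {f | ∃ i : ℕ, i ≤ p - b ∧ f = psi K p a b d i}

/-! ### Auxiliary machinery

For each `g ∈ 𝒢'` we construct a `K`-linear functional `Lf P` on the polynomial ring
(summing the coefficients of all monomials whose exponent satisfies a predicate `P`)
which kills every multiple of every element of `𝒢' \ {g}` but does not kill `g`. -/

section MinimalAux

variable {nn : ℕ} {K : Type*} [CommRing K]

/-- Total degree of an exponent vector. -/
def DgAux (u : Fin nn →₀ ℕ) : ℕ := ∑ k, u k

/-- Index-weighted degree of an exponent vector. -/
def SgAux (u : Fin nn →₀ ℕ) : ℕ := ∑ k : Fin nn, (k : ℕ) * u k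

lemma DgAux_add (u v : Fin nn →₀ ℕ) : DgAux (u + v) = DgAux u + DgAux v := by
  simp [DgAux, Finset.sum_add_distrib]

lemma SgAux_add (u v : Fin nn →₀ ℕ) : SgAux (u + v) = SgAux u + SgAux v := by
  simp [SgAux, mul_add, Finset.sum_add_distrib]

lemma DgAux_single (k : Fin nn) (c : ℕ) : DgAux (Finsupp.single k c) = c := by
  classical
  simp [DgAux, Finsupp.single_apply]

lemma SgAux_single (k : Fin nn) (c : ℕ) : SgAux (Finsupp.single k c) = (k : ℕ) * c := by
  classical
  simp [SgAux, Finsupp.single_apply, mul_ite]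

lemma DgAux_eq_zero {u : Fin nn →₀ ℕ} (h : DgAux u = 0) : u = 0 := by
  ext k
  simpa using Finset.sum_eq_zero_iff.mp h k (Finset.mem_univ k)

/-- The linear functional summing coefficients of monomials with exponent in `P`. -/
noncomputable def Lf (P : (Fin nn →₀ ℕ) → Prop) [DecidablePred P] :
    MvPolynomial (Fin nn) K →ₗ[K] K where
  toFun f := ∑ u ∈ f.support, if P u then MvPolynomial.coeff u f else 0
  map_add' f g := by
    classical
    have hsub : (f + g).support ⊆ f.support ∪ g.support := MvPolynomial.support_add
    rw [Finset.sum_subset hsub (fun u _ hu => by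
        rw [MvPolynomial.notMem_support_iff.mp hu, ite_self]),
      Finset.sum_subset (Finset.subset_union_left (s₁ := f.support) (s₂ := g.support))
        (fun u _ hu => by rw [MvPolynomial.notMem_support_iff.mp hu, ite_self]),
      Finset.sum_subset (Finset.subset_union_right (s₁ := f.support) (s₂ := g.support))
        (fun u _ hu => by rw [MvPolynomial.notMem_support_iff.mp hu, ite_self]),
      ← Finset.sum_add_distrib]
    exact Finset.sum_congr rfl fun u _ => by rw [MvPolynomial.coeff_add]; split <;> simp
  map_smul' c f := by
    classical
    have hsub : (c • f).support ⊆ f.support := MvPolynomial.support_smul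
    rw [RingHom.id_apply, Finset.sum_subset hsub (fun u _ hu => by
        rw [MvPolynomial.notMem_support_iff.mp hu, ite_self]),
      smul_eq_mul, Finset.mul_sum]
    exact Finset.sum_congr rfl fun u _ => by
      rw [MvPolynomial.coeff_smul, smul_eq_mul]; split <;> simp

lemma Lf_apply (P : (Fin nn →₀ ℕ) → Prop) [DecidablePred P] (f : MvPolynomial (Fin nn) K) :
    Lf P f = ∑ u ∈ f.support, if P u then MvPolynomial.coeff u f else 0 := rfl

lemma Lf_monomial (P : (Fin nn →₀ ℕ) → Prop) [DecidablePred P] (u : Fin nn →₀ ℕ) (c : K) :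
    Lf P (monomial u c) = if P u then c else 0 := by
  classical
  rw [Lf_apply]
  by_cases hc : c = 0
  · simp [hc]
  · simp [MvPolynomial.support_monomial, hc, MvPolynomial.coeff_monomial]

lemma Lf_mul_monomial (P : (Fin nn →₀ ℕ) → Prop) [DecidablePred P]
    (q : MvPolynomial (Fin nn) K) (α : Fin nn →₀ ℕ) :
    Lf P (q * monomial α 1) =
      ∑ ν ∈ q.support, if P (ν + α) then MvPolynomial.coeff ν q else 0 := by
  conv_lhs => rw [q.as_sum, Finset.sum_mul]
  rw [map_sum]
  exact Finset.sum_congr rfl fun ν _ => by rw [monomial_mul, mul_one, Lf_monomial]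

lemma Lf_mul_binomial (P : (Fin nn →₀ ℕ) → Prop) [DecidablePred P] {α β : Fin nn →₀ ℕ}
    (hiff : ∀ ν, P (ν + α) ↔ P (ν + β)) (q : MvPolynomial (Fin nn) K) :
    Lf P (q * (monomial α 1 - monomial β 1)) = 0 := by
  rw [mul_sub, map_sub, Lf_mul_monomial, Lf_mul_monomial, sub_eq_zero]
  exact Finset.sum_congr rfl fun ν _ => if_congr (hiff ν) rfl rfl

lemma Lf_span_zero (P : (Fin nn →₀ ℕ) → Prop) [DecidablePred P]
    {S : Set (MvPolynomial (Fin nn) K)}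
    (hS : ∀ h ∈ S, ∃ α β : Fin nn →₀ ℕ,
      h = monomial α 1 - monomial β 1 ∧ ∀ ν, P (ν + α) ↔ P (ν + β))
    {g : MvPolynomial (Fin nn) K} (hg : g ∈ Ideal.span S) : Lf P g = 0 := by
  have H : ∀ q : MvPolynomial (Fin nn) K, Lf (K := K) P (q * g) = 0 := by
    refine Submodule.span_induction
      (p := fun x _ => ∀ q : MvPolynomial (Fin nn) K, Lf (K := K) P (q * x) = 0)
      ?_ ?_ ?_ ?_ hg
    · rintro y hy q
      obtain ⟨α, β, rfl, hiff⟩ := hS y hy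
      exact Lf_mul_binomial P hiff q
    · intro q; rw [mul_zero, map_zero]
    · intro x y _ _ hx hy q; rw [mul_add, map_add, hx, hy, add_zero]
    · intro r x _ hx q; rw [smul_eq_mul, ← mul_assoc, hx]
  simpa using H 1

lemma X_mul_X_eq (k l : Fin nn) :
    (X k * X l : MvPolynomial (Fin nn) K) =
      monomial (Finsupp.single k 1 + Finsupp.single l 1) 1 := by
  rw [show (X k : MvPolynomial (Fin nn) K) = monomial (Finsupp.single k 1) 1 from rfl,
    show (X l : MvPolynomial (Fin nn) K) = monomial (Finsupp.single l 1) 1 from rfl,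
    monomial_mul, one_mul]

lemma X_mul_X_pow_eq (k l : Fin nn) (e : ℕ) :
    (X k * X l ^ e : MvPolynomial (Fin nn) K) =
      monomial (Finsupp.single k 1 + Finsupp.single l e) 1 := by
  rw [X_pow_eq_monomial,
    show (X k : MvPolynomial (Fin nn) K) = monomial (Finsupp.single k 1) 1 from rfl,
    monomial_mul, one_mul]

end MinimalAux

section CastAux

lemma Fin_cast_val (p k : ℕ) (hk : k ≤ p) : (((k : ℕ) : Fin (p + 1)) : ℕ) = k :=
  Fin.val_cast_of_lt (by omega)

lemma Fin_cast_inj {p k l : ℕ} (hk : k ≤ p) (hl : l ≤ p)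
    (h : ((k : ℕ) : Fin (p + 1)) = ((l : ℕ) : Fin (p + 1))) : k = l := by
  have := congrArg Fin.val h
  rwa [Fin_cast_val p k hk, Fin_cast_val p l hl] at this

lemma Fin_cast_ne (p k l : ℕ) (hk : k ≤ p) (hl : l ≤ p) (h : k ≠ l) :
    ((k : ℕ) : Fin (p + 1)) ≠ ((l : ℕ) : Fin (p + 1)) :=
  fun hc => h (Fin_cast_inj hk hl hc)

end CastAux

section BinomialForms

variable (K : Type*) [Field K]

lemma phi_eq (p i j : ℕ) :
    phi K p i j =
      monomial (Finsupp.single ((i : ℕ) : Fin (p + 1)) 1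
          + Finsupp.single ((j : ℕ) : Fin (p + 1)) 1) 1
      - monomial (Finsupp.single ((eps p i j : ℕ) : Fin (p + 1)) 1
          + Finsupp.single ((i + j - eps p i j : ℕ) : Fin (p + 1)) 1) 1 := by
  rw [phi, X_mul_X_eq, X_mul_X_eq]

lemma psi_eq (p a b d i : ℕ) :
    psi K p a b d i =
      monomial (Finsupp.single ((b + i : ℕ) : Fin (p + 1)) 1
          + Finsupp.single ((p : ℕ) : Fin (p + 1)) a) 1
      - monomial (Finsupp.single ((i : ℕ) : Fin (p + 1)) 1
          + Finsupp.single (0 : Fin (p + 1)) (a + d)) 1 := by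
  rw [psi, X_mul_X_pow_eq, X_mul_X_pow_eq]

end BinomialForms

section PairLemmas

/-- If two "inner" quadratic monomials agree then the index pairs agree. -/
lemma pair_eq (p i j i' j' : ℕ) (h1 : 1 ≤ i) (hij : i ≤ j) (hjp : j < p)
    (h1' : 1 ≤ i') (hij' : i' ≤ j') (hj'p : j' < p)
    (h : Finsupp.single ((i' : ℕ) : Fin (p + 1)) 1 + Finsupp.single ((j' : ℕ) : Fin (p + 1)) 1
       = Finsupp.single ((i : ℕ) : Fin (p + 1)) 1
          + Finsupp.single ((j : ℕ) : Fin (p + 1)) (1 : ℕ)) :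
    i' = i ∧ j' = j := by
  rcases (Finsupp.single_add_single_eq_single_add_single
      (one_ne_zero) (one_ne_zero)).mp h with ⟨ha, hb⟩ | ⟨-, ha, hb⟩ | ⟨habs, -⟩
  · exact ⟨Fin_cast_inj (by omega) (by omega) ha, Fin_cast_inj (by omega) (by omega) hb⟩
  · have e1 := Fin_cast_inj (p := p) (by omega) (by omega) ha
    have e2 := Fin_cast_inj (p := p) (by omega) (by omega) hb
    omega
  · omega

/-- The "boundary" quadratic monomial of `φ(i',j')` is never an inner quadratic monomial. -/
lemma beta_ne (p i j i' j' : ℕ) (h1 : 1 ≤ i) (hij : i ≤ j) (hjp : j < p)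
    (h1' : 1 ≤ i') (hij' : i' ≤ j') (hj'p : j' < p) :
    Finsupp.single ((eps p i' j' : ℕ) : Fin (p + 1)) 1
        + Finsupp.single ((i' + j' - eps p i' j' : ℕ) : Fin (p + 1)) 1
      ≠ Finsupp.single ((i : ℕ) : Fin (p + 1)) 1
        + Finsupp.single ((j : ℕ) : Fin (p + 1)) (1 : ℕ) := by
  intro h
  rcases lt_or_ge (i' + j') p with hlt | hge
  · have he : eps p i' j' = i' + j' := if_pos hlt
    have hc : i' + j' - eps p i' j' = 0 := by omega
    rw [hc, he] at h
    have h0 := DFunLike.congr_fun h (0 : Fin (p + 1))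
    have hi0 : ((i : ℕ) : Fin (p + 1)) ≠ 0 := by
      simpa using Fin_cast_ne p i 0 (by omega) (by omega) (by omega)
    have hj0 : ((j : ℕ) : Fin (p + 1)) ≠ 0 := by
      simpa using Fin_cast_ne p j 0 (by omega) (by omega) (by omega)
    simp only [Nat.cast_zero, Finsupp.add_apply, Finsupp.single_apply, if_neg hi0, if_neg hj0,
      eq_self_iff_true, if_true, add_zero] at h0
    split at h0 <;> omega
  · have he : eps p i' j' = p := if_neg (by omega)
    rw [he] at h
    have h0 := DFunLike.congr_fun h ((p : ℕ) : Fin (p + 1))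
    have hip := Fin_cast_ne p i p (by omega) le_rfl (by omega)
    have hjp2 := Fin_cast_ne p j p (by omega) le_rfl (by omega)
    have hsp := Fin_cast_ne p (i' + j' - p) p (by omega) le_rfl (by omega)
    simp only [Finsupp.add_apply, Finsupp.single_apply, if_neg hip, if_neg hjp2, if_neg hsp,
      eq_self_iff_true, if_true, add_zero] at h0
    omega

end PairLemmas

/-- `𝒢'` is a minimal generating set for `℘`: no element of `𝒢'` belongs to the
ideal generated by the remaining elements of `𝒢'`. -/
theorem Gset_minimal
    (K : Type*) [Field K]
    (p d a b : ℕ) (hp : 2 ≤ p) (hd : 1 ≤ d) (ha : 1 ≤ a) (hb1 : 1 ≤ b) (hbp : b ≤ p)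
    (m : ℕ → ℕ) (hm : ∀ i, m i = a * p + b + i * d)
    (hgcd : Nat.gcd (m 0) d = 1)
    (hmin : ∀ i ≤ p, m i ∉ AddSubmonoid.closure {x : ℕ | ∃ j ≤ p, j ≠ i ∧ x = m j}) :
    ∀ g ∈ Gset K p a b d, g ∉ Ideal.span (Gset K p a b d \ {g}) := by
  classical
  intro g hg hmem
  simp only [Gset, Set.mem_union, Set.mem_setOf_eq] at hg
  rcases hg with ⟨i, j, h1, hij, hjp, rfl⟩ | ⟨i, hile, rfl⟩
  · -- Case `g = φ(i,j)`.
    -- Use the functional extracting the coefficient of the monomial `X_i X_j`.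
    have hS : ∀ h ∈ Gset K p a b d \ {phi K p i j},
        ∃ α β : Fin (p + 1) →₀ ℕ, h = monomial α 1 - monomial β 1 ∧
          ∀ ν, (ν + α = Finsupp.single ((i : ℕ) : Fin (p + 1)) 1
                  + Finsupp.single ((j : ℕ) : Fin (p + 1)) 1)
            ↔ (ν + β = Finsupp.single ((i : ℕ) : Fin (p + 1)) 1
                  + Finsupp.single ((j : ℕ) : Fin (p + 1)) 1) := by
      rintro h ⟨hh, hne⟩
      simp only [Gset, Set.mem_union, Set.mem_setOf_eq] at hh
      rcases hh with ⟨i', j', h1', hij', hj'p, rfl⟩ | ⟨i', hi', rfl⟩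
      · refine ⟨_, _, phi_eq K p i' j', fun ν => iff_of_false ?_ ?_⟩
        · intro hν
          have hD := congrArg DgAux hν
          simp only [DgAux_add, DgAux_single] at hD
          have hν0 : ν = 0 := DgAux_eq_zero (by omega)
          rw [hν0, zero_add] at hν
          obtain ⟨e1, e2⟩ := pair_eq p i j i' j' h1 hij hjp h1' hij' hj'p hν
          subst e1; subst e2
          exact hne rfl
        · intro hν
          have hD := congrArg DgAux hν
          simp only [DgAux_add, DgAux_single] at hD
          have hν0 : ν = 0 := DgAux_eq_zero (by omega)
          rw [hν0, zero_add] at hν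
          exact beta_ne p i j i' j' h1 hij hjp h1' hij' hj'p hν
      · refine ⟨_, _, psi_eq K p a b d i', fun ν => iff_of_false ?_ ?_⟩
        · intro hν
          have hD := congrArg DgAux hν
          simp only [DgAux_add, DgAux_single] at hD
          -- hD : DgAux ν + (1 + a) = 1 + 1, so a = 1 and ν = 0
          have hν0 : ν = 0 := DgAux_eq_zero (by omega)
          rw [hν0, zero_add] at hν
          have h0 := DFunLike.congr_fun hν ((p : ℕ) : Fin (p + 1))
          have hipn := Fin_cast_ne p i p (by omega) le_rfl (by omega)
          have hjpn := Fin_cast_ne p j p (by omega) le_rfl (by omega)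
          simp only [Finsupp.add_apply, Finsupp.single_apply, if_neg hipn, if_neg hjpn,
            eq_self_iff_true, if_true, add_zero] at h0
          split at h0 <;> omega
        · intro hν
          have hD := congrArg DgAux hν
          simp only [DgAux_add, DgAux_single] at hD
          omega
    have hz := Lf_span_zero (K := K)
      (P := fun u => u = Finsupp.single ((i : ℕ) : Fin (p + 1)) 1
          + Finsupp.single ((j : ℕ) : Fin (p + 1)) 1) hS hmem
    rw [phi_eq, map_sub, Lf_monomial, Lf_monomial] at hz
    have hb2 := beta_ne p i j i j h1 hij hjp h1 hij hjp
    simp only [hb2, eq_self_iff_true, if_true, if_false, sub_zero] at hz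
    exact one_ne_zero hz
  · -- Case `g = ψ(b,i)`.
    have hS : ∀ h ∈ Gset K p a b d \ {psi K p a b d i},
        ∃ α β : Fin (p + 1) →₀ ℕ, h = monomial α 1 - monomial β 1 ∧
          ∀ ν, (DgAux (ν + α) = a + d + 1 ∧ SgAux (ν + α) = i)
            ↔ (DgAux (ν + β) = a + d + 1 ∧ SgAux (ν + β) = i) := by
      rintro h ⟨hh, hne⟩
      simp only [Gset, Set.mem_union, Set.mem_setOf_eq] at hh
      rcases hh with ⟨i', j', h1', hij', hj'p, rfl⟩ | ⟨i', hi', rfl⟩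
      · refine ⟨_, _, phi_eq K p i' j', fun ν => ?_⟩
        have heps : eps p i' j' ≤ p ∧ eps p i' j' ≤ i' + j' ∧ i' + j' - eps p i' j' ≤ p := by
          unfold eps; split <;> omega
        simp only [DgAux_add, SgAux_add, DgAux_single, SgAux_single]
        rw [Fin_cast_val p i' (by omega), Fin_cast_val p j' (by omega),
          Fin_cast_val p (eps p i' j') (by omega),
          Fin_cast_val p (i' + j' - eps p i' j') (by omega)]
        omega
      · have hii : i' ≠ i := by
          rintro rfl
          exact hne rfl
        refine ⟨_, _, psi_eq K p a b d i', fun ν => iff_of_false ?_ ?_⟩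
        · rintro ⟨-, hB⟩
          simp only [SgAux_add, SgAux_single] at hB
          rw [Fin_cast_val p (b + i') (by omega), Fin_cast_val p p le_rfl] at hB
          have hpa : p ≤ p * a := Nat.le_mul_of_pos_right p (by omega)
          omega
        · rintro ⟨hA, hB⟩
          simp only [DgAux_add, DgAux_single] at hA
          have hν0 : ν = 0 := DgAux_eq_zero (by omega)
          subst hν0
          rw [zero_add] at hB
          simp only [SgAux_add, SgAux_single] at hB
          rw [Fin_cast_val p i' (by omega)] at hB
          simp only [Fin.val_zero, zero_mul, add_zero, mul_one] at hB
          exact hii hB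
    have hz := Lf_span_zero (K := K)
      (P := fun u => DgAux u = a + d + 1 ∧ SgAux u = i) hS hmem
    rw [psi_eq, map_sub, Lf_monomial, Lf_monomial] at hz
    have hP1 : ¬ (DgAux (Finsupp.single ((b + i : ℕ) : Fin (p + 1)) 1
          + Finsupp.single ((p : ℕ) : Fin (p + 1)) a) = a + d + 1
        ∧ SgAux (Finsupp.single ((b + i : ℕ) : Fin (p + 1)) 1
          + Finsupp.single ((p : ℕ) : Fin (p + 1)) a) = i) := by
      rintro ⟨hA, -⟩
      simp only [DgAux_add, DgAux_single] at hA
      omega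
    have hP2 : DgAux (Finsupp.single ((i : ℕ) : Fin (p + 1)) 1
          + Finsupp.single (0 : Fin (p + 1)) (a + d)) = a + d + 1
        ∧ SgAux (Finsupp.single ((i : ℕ) : Fin (p + 1)) 1
          + Finsupp.single (0 : Fin (p + 1)) (a + d)) = i := by
      constructor
      · simp only [DgAux_add, DgAux_single]; omega
      · simp only [SgAux_add, SgAux_single]
        rw [Fin_cast_val p i (by omega)]
        simp
    simp only [hP1, hP2, if_true, if_false, zero_sub] at hz
    exact one_ne_zero (neg_eq_zero.mp hz)
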